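/- Fix n ≥ 2 and complex numbers q_{ij} (1 ≤ i, j ≤ n) with q_{ii} = 1, q_{ji} = q_{ij}^{-1} and |q_{ij}| = 1. Let T = (T_1, …, T_n) be a q-spherical unitary on a complex Hilbert space H, and let D be the block operator on H^n with (i,j) entry δ_{ij} I − T_i^* T_j. Then for every (h_1, …, h_n) ∈ H^n: Σ_{i,r=1}^n ‖T_i^* h_r − conj(q_{ir}) T_r^* h_i‖² = 2 ⟨D(h_1, …, h_n), (h_1, …, h_n)⟩. -/

import Mathlib

open scoped BigOperators

noncomputable instance piLpCompleteSpace {n : ℕ} {H : Type*} [NormedAddCommGroup H]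
    [CompleteSpace H] : CompleteSpace (PiLp 2 (fun _ : Fin n => H)) :=
  inferInstance

open NormedSpace ContinuousLinearMap

local notation "⟪" x ", " y "⟫" => @inner ℂ _ _ x y

lemma aux_semiconj_exp {𝔸 : Type*} [NormedRing 𝔸] [NormedAlgebra ℂ 𝔸] [CompleteSpace 𝔸]
    {a x y : 𝔸} (h : a * x = y * a) :
    a * NormedSpace.exp x = NormedSpace.exp y * a := by
  have hsem : SemiconjBy a x y := h
  simp only [NormedSpace.exp_eq_tsum ℂ]
  rw [← (NormedSpace.expSeries_summable' (𝕂 := ℂ) x).tsum_mul_left a,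
      ← (NormedSpace.expSeries_summable' (𝕂 := ℂ) y).tsum_mul_right a]
  congr 1
  funext n
  rw [mul_smul_comm, smul_mul_assoc, (hsem.pow_right n).eq]

lemma aux_exp_add_of_commute {𝔸 : Type*} [NormedRing 𝔸] [NormedAlgebra ℂ 𝔸] [CompleteSpace 𝔸]
    {x y : 𝔸} (hxy : Commute x y) :
    NormedSpace.exp (x + y) = NormedSpace.exp x * NormedSpace.exp y :=
  NormedSpace.exp_add_of_commute_of_mem_ball (𝕂 := ℂ) hxy
    ((NormedSpace.expSeries_radius_eq_top ℂ 𝔸).symm ▸ edist_lt_top _ _)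
    ((NormedSpace.expSeries_radius_eq_top ℂ 𝔸).symm ▸ edist_lt_top _ _)

lemma aux_exp_neg_mul_exp {𝔸 : Type*} [NormedRing 𝔸] [NormedAlgebra ℂ 𝔸] [CompleteSpace 𝔸]
    (x : 𝔸) : NormedSpace.exp (-x) * NormedSpace.exp x = 1 := by
  rw [← aux_exp_add_of_commute (Commute.refl x).neg_left, neg_add_cancel,
    NormedSpace.exp_zero]

lemma aux_exp_mul_exp_neg {𝔸 : Type*} [NormedRing 𝔸] [NormedAlgebra ℂ 𝔸] [CompleteSpace 𝔸]
    (x : 𝔸) : NormedSpace.exp x * NormedSpace.exp (-x) = 1 := by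
  rw [← aux_exp_add_of_commute (Commute.refl x).neg_right, add_neg_cancel,
    NormedSpace.exp_zero]

section FP

variable {H : Type*} [NormedAddCommGroup H] [InnerProductSpace ℂ H] [CompleteSpace H]

lemma aux_norm_exp_skew_apply (S : H →L[ℂ] H) (hS : star S = -S) (x : H) :
    ‖NormedSpace.exp S x‖ = ‖x‖ := by
  have h1 : star (NormedSpace.exp S) * NormedSpace.exp S = 1 := by
    rw [NormedSpace.star_exp, hS, aux_exp_neg_mul_exp]
  have h2 : ⟪NormedSpace.exp S x, NormedSpace.exp S x⟫ = ⟪x, x⟫ := by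
    rw [← ContinuousLinearMap.adjoint_inner_right (NormedSpace.exp S) x
      (NormedSpace.exp S x)]
    have : (ContinuousLinearMap.adjoint (NormedSpace.exp S)) (NormedSpace.exp S x) = x := by
      rw [← ContinuousLinearMap.star_eq_adjoint, ← ContinuousLinearMap.mul_apply, h1,
        ContinuousLinearMap.one_apply]
    rw [this]
  rw [@norm_eq_sqrt_re_inner ℂ, h2, ← @norm_eq_sqrt_re_inner ℂ]

lemma fuglede_putnam (M N A : H →L[ℂ] H)
    (hM : M * ContinuousLinearMap.adjoint M = ContinuousLinearMap.adjoint M * M)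
    (hN : N * ContinuousLinearMap.adjoint N = ContinuousLinearMap.adjoint N * N)
    (h : A * N = M * A) :
    A * ContinuousLinearMap.adjoint N = ContinuousLinearMap.adjoint M * A := by
  set M' := ContinuousLinearMap.adjoint M with hM'
  set N' := ContinuousLinearMap.adjoint N with hN'
  have hMc : Commute M M' := hM
  have hNc : Commute N N' := hN
  have hstarM : star M = M' := ContinuousLinearMap.star_eq_adjoint M
  have hstarN : star N = N' := ContinuousLinearMap.star_eq_adjoint N
  have hstarM' : star M' = M := by rw [← hstarM, star_star]
  have hstarN' : star N' = N := by rw [← hstarN, star_star]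
  have hstep1 : ∀ z : ℂ, A * NormedSpace.exp (z • N) = NormedSpace.exp (z • M) * A := by
    intro z
    exact aux_semiconj_exp (by rw [mul_smul_comm, h, smul_mul_assoc])
  set F : ℂ → H →L[ℂ] H :=
    fun z => NormedSpace.exp (z • M') * A * NormedSpace.exp ((-z) • N') with hF
  have hFdiff : Differentiable ℂ F := by
    have d1 : Differentiable ℂ fun z : ℂ => NormedSpace.exp (z • M') :=
      fun z => (hasDerivAt_exp_smul_const (𝕂 := ℂ) M' z).differentiableAt
    have d2 : Differentiable ℂ fun z : ℂ => NormedSpace.exp ((-z) • N') := by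
      have he : (fun z : ℂ => NormedSpace.exp ((-z) • N'))
          = fun z : ℂ => NormedSpace.exp (z • (-N')) := by
        funext z; rw [neg_smul, smul_neg]
      rw [he]
      exact fun z => (hasDerivAt_exp_smul_const (𝕂 := ℂ) (-N') z).differentiableAt
    exact (d1.mul (differentiable_const A)).mul d2
  have hFbound : ∀ z, ‖F z‖ ≤ ‖A‖ := by
    intro z
    set c := starRingEnd ℂ z with hc
    have hAc : NormedSpace.exp (c • M) * A = A * NormedSpace.exp (c • N) :=
      (hstep1 c).symm
    have hcomm1 : Commute (z • M') (-(c • M)) :=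
      (((hMc.symm).smul_left z).smul_right c).neg_right
    have hcomm2 : Commute (c • N) ((-z) • N') :=
      ((hNc.smul_left c).smul_right (-z))
    have key : F z = NormedSpace.exp (z • M' + -(c • M)) * A
        * NormedSpace.exp (c • N + (-z) • N') := by
      rw [aux_exp_add_of_commute hcomm1, aux_exp_add_of_commute hcomm2]
      calc NormedSpace.exp (z • M') * A * NormedSpace.exp ((-z) • N')
          = NormedSpace.exp (z • M') * ((NormedSpace.exp (-(c • M))
            * NormedSpace.exp (c • M)) * A) * NormedSpace.exp ((-z) • N') := by
            rw [aux_exp_neg_mul_exp, one_mul]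
        _ = NormedSpace.exp (z • M') * NormedSpace.exp (-(c • M))
            * (NormedSpace.exp (c • M) * A) * NormedSpace.exp ((-z) • N') := by
            simp only [mul_assoc]
        _ = NormedSpace.exp (z • M') * NormedSpace.exp (-(c • M))
            * (A * NormedSpace.exp (c • N)) * NormedSpace.exp ((-z) • N') := by
            rw [hAc]
        _ = NormedSpace.exp (z • M') * NormedSpace.exp (-(c • M)) * A
            * (NormedSpace.exp (c • N) * NormedSpace.exp ((-z) • N')) := by
            simp only [mul_assoc]
    have hskew1 : star (z • M' + -(c • M)) = -(z • M' + -(c • M)) := by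
      rw [star_add, star_neg, star_smul, star_smul, hstarM', hstarM]
      simp only [hc, Complex.star_def, Complex.conj_conj]
      module
    have hskew2 : star (c • N + (-z) • N') = -(c • N + (-z) • N') := by
      rw [star_add, star_smul, star_smul, hstarN', hstarN]
      simp only [hc, Complex.star_def, Complex.conj_conj, map_neg]
      module
    refine key ▸ ContinuousLinearMap.opNorm_le_bound _ (norm_nonneg A) fun x => ?_
    rw [ContinuousLinearMap.mul_apply, ContinuousLinearMap.mul_apply,
      aux_norm_exp_skew_apply _ hskew1]
    calc ‖A (NormedSpace.exp (c • N + (-z) • N') x)‖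
        ≤ ‖A‖ * ‖NormedSpace.exp (c • N + (-z) • N') x‖ := A.le_opNorm _
      _ = ‖A‖ * ‖x‖ := by rw [aux_norm_exp_skew_apply _ hskew2]
  have hb : Bornology.IsBounded (Set.range F) := by
    rw [isBounded_iff_forall_norm_le]
    exact ⟨‖A‖, by rintro y ⟨z, rfl⟩; exact hFbound z⟩
  have hF0 : F 0 = A := by
    simp [hF, NormedSpace.exp_zero]
  have hconst : ∀ z, F z = A := fun z => (hFdiff.apply_eq_apply_of_bounded hb z 0).trans hF0
  have key2 : ∀ z : ℂ, NormedSpace.exp (z • M') * A = A * NormedSpace.exp (z • N') := by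
    intro z
    have h1 : NormedSpace.exp ((-z) • N') * NormedSpace.exp (z • N') = 1 := by
      rw [neg_smul]; exact aux_exp_neg_mul_exp _
    calc NormedSpace.exp (z • M') * A
        = NormedSpace.exp (z • M') * A
          * (NormedSpace.exp ((-z) • N') * NormedSpace.exp (z • N')) := by
          rw [h1, mul_one]
      _ = F z * NormedSpace.exp (z • N') := by rw [hF]; simp only [mul_assoc]
      _ = A * NormedSpace.exp (z • N') := by rw [hconst z]
  have hd1 : HasDerivAt (fun z : ℂ => NormedSpace.exp (z • M') * A) (M' * A) 0 := by
    have := (hasDerivAt_exp_smul_const' (𝕂 := ℂ) M' 0).mul_const A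
    simpa [NormedSpace.exp_zero] using this
  have hd2 : HasDerivAt (fun z : ℂ => A * NormedSpace.exp (z • N')) (A * N') 0 := by
    have := (hasDerivAt_exp_smul_const' (𝕂 := ℂ) N' 0).const_mul A
    simpa [NormedSpace.exp_zero] using this
  have hfe : (fun z : ℂ => NormedSpace.exp (z • M') * A)
      = fun z : ℂ => A * NormedSpace.exp (z • N') := funext key2
  rw [← hfe] at hd2
  exact (hd1.unique hd2).symm

end FP

/-- For a `q`-spherical unitary `T` and the block operator `D` on `H^n` with `(i,j)` entry
`δ_{ij} I − T_i^* T_j`, one has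
`Σ_{i,r} ‖T_i^* h_r − conj(q_{ir}) T_r^* h_i‖² = 2 ⟨D h, h⟩` for every `h ∈ H^n`. -/
theorem stmt15 {H : Type*} [NormedAddCommGroup H] [InnerProductSpace ℂ H] [CompleteSpace H]
    {n : ℕ} (hn : 2 ≤ n) (q : Fin n → Fin n → ℂ)
    (hq1 : ∀ i, q i i = 1) (hq2 : ∀ i j, q j i = (q i j)⁻¹) (hq3 : ∀ i j, ‖q i j‖ = 1)
    (T : Fin n → H →L[ℂ] H)
    (hnormal : ∀ i, T i * ContinuousLinearMap.adjoint (T i)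
      = ContinuousLinearMap.adjoint (T i) * T i)
    (hqcomm : ∀ i j, T j * T i = q i j • (T i * T j))
    (hsph : ∑ i, T i * ContinuousLinearMap.adjoint (T i) = 1)
    (D : PiLp 2 (fun _ : Fin n => H) →L[ℂ] PiLp 2 (fun _ : Fin n => H))
    (hD : ∀ (h : PiLp 2 (fun _ : Fin n => H)) (i : Fin n),
      D h i = h i - ∑ j, ContinuousLinearMap.adjoint (T i) (T j (h j))) :
    ∀ h : PiLp 2 (fun _ : Fin n => H),
      ((∑ i, ∑ r, ‖ContinuousLinearMap.adjoint (T i) (h r)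
          - (starRingEnd ℂ (q i r)) • ContinuousLinearMap.adjoint (T r) (h i)‖ ^ 2 : ℝ) : ℂ)
        = 2 * (inner ℂ (D h) h : ℂ) := by
  intro h
  classical
  set A : Fin n → H →L[ℂ] H := fun i => ContinuousLinearMap.adjoint (T i) with hAdef
  -- basic facts about q
  have hqq : ∀ i j, q i j * starRingEnd ℂ (q i j) = 1 := by
    intro i j
    rw [Complex.mul_conj, Complex.normSq_eq_norm_sq, hq3 i j]
    norm_num
  have hqconj : ∀ i j, starRingEnd ℂ (q i j) = q j i := by
    intro i j
    rw [hq2 i j]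
    exact (inv_eq_of_mul_eq_one_right (hqq i j)).symm
  have hqmul : ∀ i j, q i j * q j i = 1 := by
    intro i j
    rw [← hqconj i j]
    exact hqq i j
  -- Fuglede-Putnam consequence
  have key : ∀ i r, T i * A r = q i r • (A r * T i) := by
    intro i r
    have hMnorm : (q r i • T r) * ContinuousLinearMap.adjoint (q r i • T r)
        = ContinuousLinearMap.adjoint (q r i • T r) * (q r i • T r) := by
      rw [← ContinuousLinearMap.star_eq_adjoint, star_smul,
        ContinuousLinearMap.star_eq_adjoint]
      simp only [smul_mul_assoc, mul_smul_comm, smul_smul]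
      rw [hnormal r, mul_comm]
    have hcomm : T i * T r = (q r i • T r) * T i := by
      rw [hqcomm r i, smul_mul_assoc]
    have hfp := fuglede_putnam (q r i • T r) (T r) (T i) hMnorm (hnormal r) hcomm
    rw [← ContinuousLinearMap.star_eq_adjoint (q r i • T r), star_smul,
      ContinuousLinearMap.star_eq_adjoint] at hfp
    rw [hfp, smul_mul_assoc]
    congr 1
    rw [Complex.star_def, hqconj r i]
  have innAA : ∀ i r (x y : H), (inner ℂ (A i x) (A r y) : ℂ)
      = q i r * inner ℂ (T r x) (T i y) := by
    intro i r x y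
    rw [show (A r y : H) = ContinuousLinearMap.adjoint (T r) y from rfl,
      ContinuousLinearMap.adjoint_inner_right]
    have h1 : T r (A i x) = (q r i • (A i * T r)) x := by rw [← key r i]; rfl
    rw [h1]
    simp only [ContinuousLinearMap.smul_apply, ContinuousLinearMap.mul_apply, inner_smul_left]
    rw [show ((A i) (T r x) : H) = ContinuousLinearMap.adjoint (T i) (T r x) from rfl,
      ContinuousLinearMap.adjoint_inner_left, hqconj r i]
  have innAsum : ∀ x y : H, ∑ i, (inner ℂ (A i x) (A i y) : ℂ) = inner ℂ x y := by
    intro x y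
    have h1 : ∀ i : Fin n, (inner ℂ (A i x) (A i y) : ℂ) = inner ℂ ((T i * A i) x) y := by
      intro i
      rw [show (A i y : H) = ContinuousLinearMap.adjoint (T i) y from rfl,
        ContinuousLinearMap.adjoint_inner_right]
      rfl
    rw [Finset.sum_congr rfl (fun i _ => h1 i), ← sum_inner]
    congr 1
    calc ∑ i, (T i * A i) x = (∑ i, T i * A i) x := by
          rw [ContinuousLinearMap.sum_apply]
      _ = x := by rw [hsph]; rfl
  -- expansion of each summand
  set S : ℂ := ∑ i, ∑ r, (inner ℂ (T r (h r)) (T i (h i)) : ℂ) with hS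
  have expand : ∀ i r : Fin n,
      (inner ℂ (A i (h r) - (starRingEnd ℂ (q i r)) • A r (h i))
        (A i (h r) - (starRingEnd ℂ (q i r)) • A r (h i)) : ℂ)
      = inner ℂ (A i (h r)) (A i (h r)) + inner ℂ (A r (h i)) (A r (h i))
        - inner ℂ (T r (h r)) (T i (h i)) - inner ℂ (T i (h i)) (T r (h r)) := by
    intro i r
    rw [inner_sub_left, inner_sub_right, inner_sub_right, inner_smul_left, inner_smul_right,
      inner_smul_left, inner_smul_right, innAA i r, innAA r i]
    simp only [Complex.conj_conj]
    have u1 := hqq i r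
    have u2 := hqmul i r
    linear_combination ((inner ℂ (A r (h i)) (A r (h i)) : ℂ)
        - (inner ℂ (T r (h r)) (T i (h i)) : ℂ)) * u1
      - (inner ℂ (T i (h i)) (T r (h r)) : ℂ) * u2
  -- LHS computation
  have lhs_eq : ((∑ i, ∑ r, ‖A i (h r) - (starRingEnd ℂ (q i r)) • A r (h i)‖ ^ 2 : ℝ) : ℂ)
      = 2 * (∑ i, (inner ℂ (h i) (h i) : ℂ)) - 2 * S := by
    push_cast
    have h1 : ∀ (i r : Fin n),
        ((‖A i (h r) - (starRingEnd ℂ (q i r)) • A r (h i)‖ : ℂ) ^ 2)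
        = (inner ℂ (A i (h r) - (starRingEnd ℂ (q i r)) • A r (h i))
            (A i (h r) - (starRingEnd ℂ (q i r)) • A r (h i)) : ℂ) :=
      fun i r => by rw [inner_self_eq_norm_sq_to_K (𝕜 := ℂ)]; norm_cast
    calc (∑ i, ∑ r, ((‖A i (h r) - (starRingEnd ℂ (q i r)) • A r (h i)‖ : ℂ) ^ 2))
        = ∑ i, ∑ r, ((inner ℂ (A i (h r)) (A i (h r)) : ℂ)
            + inner ℂ (A r (h i)) (A r (h i))
            - inner ℂ (T r (h r)) (T i (h i)) - inner ℂ (T i (h i)) (T r (h r))) := by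
          refine Finset.sum_congr rfl fun i _ => Finset.sum_congr rfl fun r _ => ?_
          rw [h1 i r, expand i r]
      _ = 2 * (∑ i, (inner ℂ (h i) (h i) : ℂ)) - 2 * S := by
          simp only [Finset.sum_sub_distrib, Finset.sum_add_distrib]
          have e1 : ∑ i : Fin n, ∑ r : Fin n, (inner ℂ (A i (h r)) (A i (h r)) : ℂ)
              = ∑ i, (inner ℂ (h i) (h i) : ℂ) := by
            rw [Finset.sum_comm]
            exact Finset.sum_congr rfl fun r _ => innAsum (h r) (h r)
          have e2 : ∑ i : Fin n, ∑ r : Fin n, (inner ℂ (A r (h i)) (A r (h i)) : ℂ)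
              = ∑ i, (inner ℂ (h i) (h i) : ℂ) :=
            Finset.sum_congr rfl fun i _ => innAsum (h i) (h i)
          have e3 : ∑ i : Fin n, ∑ r : Fin n, (inner ℂ (T i (h i)) (T r (h r)) : ℂ) = S := by
            rw [hS, Finset.sum_comm]
          rw [e1, e2, e3, hS]
          ring
  -- RHS computation
  have rhs_eq : (inner ℂ (D h) h : ℂ) = (∑ i, (inner ℂ (h i) (h i) : ℂ)) - S := by
    rw [PiLp.inner_apply]
    have h1 : ∀ i : Fin n, (inner ℂ (D h i) (h i) : ℂ)
        = inner ℂ (h i) (h i) - ∑ j, (inner ℂ (T j (h j)) (T i (h i)) : ℂ) := by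
      intro i
      rw [hD h i, inner_sub_left, sum_inner]
      congr 1
      refine Finset.sum_congr rfl fun j _ => ?_
      rw [ContinuousLinearMap.adjoint_inner_left]
    rw [Finset.sum_congr rfl (fun i _ => h1 i), Finset.sum_sub_distrib, hS]
  rw [lhs_eq, rhs_eq]
  ring
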